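/- For r > 1 and λ a primitive element of GF(2^r), the group SL(2,2^r) is generated by the matrices D1 = [[1,1],[1,0]] and D2 = [[λ,0],[0,λ^{-1}]]. -/

import Mathlib

open Matrix

namespace SL2GenAux

variable {F : Type*} [Field F] [CharP F 2]

/-- Upper unipotent matrix. -/
def Em (t : F) : Matrix.SpecialLinearGroup (Fin 2) F :=
  ⟨!![1, t; 0, 1], by simp [Matrix.det_fin_two_of]⟩

/-- Lower unipotent matrix. -/
def Fm (t : F) : Matrix.SpecialLinearGroup (Fin 2) F :=
  ⟨!![1, 0; t, 1], by simp [Matrix.det_fin_two_of]⟩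

/-- Diagonal matrix. -/
def Dd (a : Fˣ) : Matrix.SpecialLinearGroup (Fin 2) F :=
  ⟨!![(a : F), 0; 0, (a : F)⁻¹], by
    simp [Matrix.det_fin_two_of, mul_inv_cancel₀ a.ne_zero]⟩

theorem Em_zero : (Em (0:F)) = 1 := by
  ext i j; fin_cases i <;> fin_cases j <;> simp [Em]

theorem Dd_mul (a b : Fˣ) : (Dd a) * (Dd b) = Dd (a*b) := by
  ext i j; simp only [Matrix.SpecialLinearGroup.coe_mul]
  fin_cases i <;> fin_cases j <;>
    simp [Dd, Matrix.mul_fin_two, _root_.mul_inv_rev, mul_comm]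

theorem Dd_one : (Dd (1:Fˣ)) = (1 : Matrix.SpecialLinearGroup (Fin 2) F) := by
  ext i j; fin_cases i <;> fin_cases j <;> simp [Dd]

/-- `Dd` as a monoid hom. -/
def DdHom : Fˣ →* Matrix.SpecialLinearGroup (Fin 2) F where
  toFun := Dd
  map_one' := Dd_one
  map_mul' a b := (Dd_mul a b).symm

theorem Dd_zpow (a : Fˣ) (k : ℤ) : (Dd a) ^ k = Dd (a ^ k) :=
  (map_zpow DdHom a k).symm

theorem Dd_mul_Em (a : Fˣ) (t : F) :
    Dd a * Em t = Em ((a:F)^2 * t) * Dd a := by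
  ext i j; simp only [Matrix.SpecialLinearGroup.coe_mul]
  fin_cases i <;> fin_cases j <;>
    simp [Dd, Em, Matrix.mul_fin_two] <;> field_simp <;> ring

theorem Dd_mul_Fm (a : Fˣ) (t : F) :
    Dd a * Fm t = Fm (((a:F)⁻¹)^2 * t) * Dd a := by
  ext i j; simp only [Matrix.SpecialLinearGroup.coe_mul]
  fin_cases i <;> fin_cases j <;>
    simp [Dd, Fm, Matrix.mul_fin_two] <;>
  field_simp

end SL2GenAux

namespace SL2GenAux
variable {F : Type*} [Field F] [CharP F 2]

theorem decomp (a b c d : F) (h : Matrix.det !![a,b;c,d] = 1) (hc : c ≠ 0) :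
    (⟨!![a,b;c,d], h⟩ : Matrix.SpecialLinearGroup (Fin 2) F) =
      Em ((a-1)/c) * Fm c * Em ((d-1)/c) := by
  rw [Matrix.det_fin_two_of] at h
  ext i j; simp only [Matrix.SpecialLinearGroup.coe_mul]
  fin_cases i <;> fin_cases j <;>
    simp [Em, Fm, Matrix.mul_fin_two] <;>
  field_simp <;> ring_nf <;>
    first
      | linear_combination h
      | linear_combination (-1 : F) * h
      | linear_combination (-2 : F) * h
      | linear_combination (2 : F) * h
      | linear_combination (-3 : F) * h
      | linear_combination (3 : F) * h

end SL2GenAux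

namespace SL2GenAux
variable {F : Type*} [Field F] [CharP F 2]

def D1 : Matrix.SpecialLinearGroup (Fin 2) F :=
  ⟨!![1, 1; 1, 0], by simp [Matrix.det_fin_two_of, CharTwo.neg_eq (1 : F)]⟩

theorem keyFm {F : Type*} [Field F] [CharP F 2] :
    (D1 : Matrix.SpecialLinearGroup (Fin 2) F) = Fm 1 * Em 1 := by
  ext i j; simp only [Matrix.SpecialLinearGroup.coe_mul]
  fin_cases i <;> fin_cases j <;>
    simp [D1, Em, Fm, Matrix.mul_fin_two, CharTwo.add_self_eq_zero]

theorem keyEm {F : Type*} [Field F] [CharP F 2] (l : Fˣ) :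
    D1 * Dd l * D1 * D1 * Dd l = Em (1 + ((l:F)⁻¹)^2) := by
  have h := l.ne_zero
  ext i j; simp only [Matrix.SpecialLinearGroup.coe_mul]
  fin_cases i <;> fin_cases j <;>
    simp [D1, Em, Dd, Matrix.mul_fin_two] <;>
  (try field_simp) <;> (try ring_nf) <;>
  (try simp [CharTwo.two_eq_zero, CharTwo.add_self_eq_zero, pow_succ, mul_comm, mul_assoc,
    mul_left_comm, sub_eq_add_neg, CharTwo.neg_eq])

end SL2GenAux


open SL2GenAux in
/-- For `r > 1` and `λ` a primitive element of `GF(2^r)`, the group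
`SL(2,2^r)` is generated by `D1 = [[1,1],[1,0]]` and `D2 = [[λ,0],[0,λ⁻¹]]`.
(The field `GF(2^r)` has characteristic 2.) -/
theorem sl2_char_two_generators (F : Type*) [Field F] [Fintype F] [CharP F 2]
    (r : ℕ) (hr : 1 < r) (hcard : Fintype.card F = 2 ^ r)
    (l : Fˣ) (hl : ∀ x : Fˣ, x ∈ Subgroup.zpowers l) :
    Subgroup.closure
      ({⟨!![1, 1; 1, 0], by
          simp [Matrix.det_fin_two_of, CharTwo.neg_eq (1 : F)]⟩,
        ⟨!![(l : F), 0; 0, (l : F)⁻¹],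
          by simp [Matrix.det_fin_two_of, mul_inv_cancel₀ l.ne_zero]⟩} :
        Set (Matrix.SpecialLinearGroup (Fin 2) F)) = ⊤ := by
  set H := Subgroup.closure
      ({⟨!![1, 1; 1, 0], by
          simp [Matrix.det_fin_two_of, CharTwo.neg_eq (1 : F)]⟩,
        ⟨!![(l : F), 0; 0, (l : F)⁻¹],
          by simp [Matrix.det_fin_two_of, mul_inv_cancel₀ l.ne_zero]⟩} :
        Set (Matrix.SpecialLinearGroup (Fin 2) F)) with hH
  -- the two generators belong to `H`
  have hD1 : (D1 : Matrix.SpecialLinearGroup (Fin 2) F) ∈ H :=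
    Subgroup.subset_closure (by left; exact Subtype.ext rfl)
  have hDl : (Dd l : Matrix.SpecialLinearGroup (Fin 2) F) ∈ H :=
    Subgroup.subset_closure (by right; exact Subtype.ext rfl)
  have hDdk : ∀ k : ℤ, (Dd (l ^ k) : Matrix.SpecialLinearGroup (Fin 2) F) ∈ H := by
    intro k; rw [← Dd_zpow]; exact H.zpow_mem hDl k
  -- the Frobenius is surjective: every unit is an even power of `l`
  have hsq : ∀ u : Fˣ, ∃ k : ℤ, ((l ^ k : Fˣ) : F) ^ 2 = (u : F) := by
    intro u
    obtain ⟨v, hv⟩ := surjective_frobenius F 2 (u : F)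
    rw [frobenius_def] at hv
    have hv0 : v ≠ 0 := by
      rintro rfl; exact u.ne_zero (by simpa using hv.symm)
    obtain ⟨k, hk⟩ := hl (Units.mk0 v hv0)
    exact ⟨k, by rw [show (l ^ k : Fˣ) = Units.mk0 v hv0 from hk]; simpa using hv⟩
  -- `l ≠ 1`, hence `1 + l⁻² ≠ 0`
  have hlne : l ≠ 1 := by
    rintro rfl
    have h2 : 1 < Nat.card Fˣ := by
      rw [Nat.card_units]
      have h4 : 4 ≤ 2 ^ r := by
        calc (4:ℕ) = 2 ^ 2 := rfl
        _ ≤ 2 ^ r := Nat.pow_le_pow_right (by norm_num) hr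
      have hc : Nat.card F = 2 ^ r := by rw [Nat.card_eq_fintype_card, hcard]
      omega
    haveI : Nontrivial Fˣ := Finite.one_lt_card_iff_nontrivial.mp h2
    obtain ⟨u, hu⟩ := exists_ne (1 : Fˣ)
    obtain ⟨k, hk⟩ := hl u
    exact hu (by simpa using hk.symm)
  have hc0 : (1 : F) + ((l:F)⁻¹)^2 ≠ 0 := by
    intro h
    rw [CharTwo.add_eq_iff_eq_add] at h
    simp only [zero_add] at h
    have h1 : ((l:F)⁻¹)^2 = 1 := h.symm
    have h2 : ((l:F)⁻¹)^2 = 1^2 := by simpa using h1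
    have h3 : (l:F)⁻¹ = 1 := injective_frobenius F 2 (by simpa [frobenius_def] using h2)
    exact hlne (by
      have : (l:F) = 1 := by
        field_simp at h3
        exact h3.symm
      exact Units.ext this)
  -- all upper unipotents are in `H`
  have hEc : Em ((1 : F) + ((l:F)⁻¹)^2) ∈ H := by
    rw [← keyEm l]
    exact H.mul_mem (H.mul_mem (H.mul_mem (H.mul_mem hD1 hDl) hD1) hD1) hDl
  have hEm : ∀ t : F, Em t ∈ H := by
    intro t
    rcases eq_or_ne t 0 with rfl | ht
    · rw [Em_zero]; exact H.one_mem
    · set c : F := (1 : F) + ((l:F)⁻¹)^2 with hc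
      obtain ⟨k, hk⟩ := hsq (Units.mk0 (t * c⁻¹) (by
        exact mul_ne_zero ht (inv_ne_zero hc0)))
      have key : Em t = Dd (l ^ k) * Em c * (Dd (l ^ k))⁻¹ := by
        rw [Dd_mul_Em, mul_inv_cancel_right]
        congr 1
        rw [hk]
        simp only [Units.val_mk0]
        field_simp
      rw [key]
      exact H.mul_mem (H.mul_mem (hDdk k) hEc) (H.inv_mem (hDdk k))
  -- all lower unipotents are in `H`
  have hF1 : Fm (1 : F) ∈ H := by
    have : Fm (1:F) = D1 * (Em 1)⁻¹ := by rw [keyFm]; group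
    rw [this]
    exact H.mul_mem hD1 (H.inv_mem (hEm 1))
  have hFm : ∀ t : F, Fm t ∈ H := by
    intro t
    rcases eq_or_ne t 0 with rfl | ht
    · have : Fm (0:F) = 1 := by ext i j; fin_cases i <;> fin_cases j <;> simp [Fm]
      rw [this]; exact H.one_mem
    · obtain ⟨k, hk⟩ := hsq (Units.mk0 t ht)⁻¹
      have key : Fm t = Dd (l ^ k) * Fm 1 * (Dd (l ^ k))⁻¹ := by
        rw [Dd_mul_Fm, mul_inv_cancel_right]
        congr 1
        rw [mul_one, inv_pow, hk]
        simp
      rw [key]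
      exact H.mul_mem (H.mul_mem (hDdk k) hF1) (H.inv_mem (hDdk k))
  -- any matrix with nonzero lower-left entry is in `H`
  have hmem1 : ∀ M : Matrix.SpecialLinearGroup (Fin 2) F, (M : Matrix (Fin 2) (Fin 2) F) 1 0 ≠ 0 → M ∈ H := by
    rintro ⟨m, hm⟩ h0
    have e : m = !![m 0 0, m 0 1; m 1 0, m 1 1] := Matrix.eta_fin_two m
    have e' : (⟨m, hm⟩ : Matrix.SpecialLinearGroup (Fin 2) F) =
        ⟨!![m 0 0, m 0 1; m 1 0, m 1 1], by rw [← e]; exact hm⟩ := Subtype.ext e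
    rw [e', decomp _ _ _ _ _ (by simpa using h0)]
    exact H.mul_mem (H.mul_mem (hEm _) (hFm _)) (hEm _)
  -- conclude
  rw [Subgroup.eq_top_iff']
  intro M
  by_cases h0 : (M : Matrix (Fin 2) (Fin 2) F) 1 0 ≠ 0
  · exact hmem1 M h0
  · push_neg at h0
    have ha : (M : Matrix (Fin 2) (Fin 2) F) 0 0 ≠ 0 := by
      intro ha
      have := M.2
      rw [Matrix.det_fin_two, ha, h0] at this
      simp at this
    have hN : (Fm 1 * M) ∈ H := by
      apply hmem1
      have : ((Fm 1 * M : Matrix.SpecialLinearGroup (Fin 2) F) : Matrix (Fin 2) (Fin 2) F) 1 0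
          = (M : Matrix (Fin 2) (Fin 2) F) 0 0 + (M : Matrix (Fin 2) (Fin 2) F) 1 0 := by
        simp only [Matrix.SpecialLinearGroup.coe_mul]; simp [Fm, Matrix.mul_apply, Fin.sum_univ_two]
      rw [this, h0, add_zero]
      exact ha
    have : M = (Fm 1)⁻¹ * (Fm 1 * M) := by group
    rw [this]
    exact H.mul_mem (H.inv_mem (hFm 1)) hN
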